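/- With A, D as in Example 7.1 (D skew-symmetric with D₁₃ = α, D₂₃ = β, α,β > 0, and L(f) = ‖[D,f]‖), the induced metric ρ_L on the state space of A = ℝ³ (probability vectors μ = (μ₁,μ₂,μ₃)) is ρ_L(μ,ν) = ((μ₁-ν₁)²/α² + (μ₂-ν₂)²/β²)^{1/2}. In particular the distances between the three extreme points δ₁, δ₂, δ₃ are ρ_L(δ₁,δ₃) = 1/α, ρ_L(δ₂,δ₃) = 1/β, and ρ_L(δ₁,δ₂) = (1/α² + 1/β²)^{1/2}. -/

import Mathlib

/-- The Lipschitz seminorm of Example 7.1: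
`L(f) = (α²(f₃-f₁)² + β²(f₃-f₂)²)^{1/2}` on `ℝ³`. -/
noncomputable def LDirac (α β : ℝ) (f : Fin 3 → ℝ) : ℝ :=
  Real.sqrt (α ^ 2 * (f 2 - f 0) ^ 2 + β ^ 2 * (f 2 - f 1) ^ 2)

/-- The metric on probability vectors induced by `LDirac`:
`ρ(μ,ν) = sup {|μ(f) - ν(f)| : L(f) ≤ 1}`. -/
noncomputable def rhoEx (α β : ℝ) (μ ν : Fin 3 → ℝ) : ℝ :=
  sSup {t : ℝ | ∃ f : Fin 3 → ℝ, LDirac α β f ≤ 1 ∧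
    t = |∑ i, μ i * f i - ∑ i, ν i * f i|}

set_option maxHeartbeats 1000000 in
lemma rhoEx_key (α β : ℝ) (hα : 0 < α) (hβ : 0 < β) (μ ν : Fin 3 → ℝ)
    (hsum : ∑ i, μ i = ∑ i, ν i) :
    rhoEx α β μ ν =
      Real.sqrt ((μ 0 - ν 0) ^ 2 / α ^ 2 + (μ 1 - ν 1) ^ 2 / β ^ 2) := by
  set a := μ 0 - ν 0 with ha
  set b := μ 1 - ν 1 with hb
  have hc : μ 2 - ν 2 = -(a + b) := by
    simp only [Fin.sum_univ_three] at hsum; rw [ha, hb]; linarith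
  set R := Real.sqrt (a ^ 2 / α ^ 2 + b ^ 2 / β ^ 2) with hR
  have hQ0 : (0:ℝ) ≤ a ^ 2 / α ^ 2 + b ^ 2 / β ^ 2 := by positivity
  have hR0 : 0 ≤ R := Real.sqrt_nonneg _
  have hR2 : R ^ 2 = a ^ 2 / α ^ 2 + b ^ 2 / β ^ 2 := Real.sq_sqrt hQ0
  -- upper bound
  have hub : ∀ t ∈ {t : ℝ | ∃ f : Fin 3 → ℝ, LDirac α β f ≤ 1 ∧
      t = |∑ i, μ i * f i - ∑ i, ν i * f i|}, t ≤ R := by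
    rintro t ⟨f, hf, rfl⟩
    have hE0 : (0:ℝ) ≤ α ^ 2 * (f 2 - f 0) ^ 2 + β ^ 2 * (f 2 - f 1) ^ 2 := by positivity
    have hE1 : α ^ 2 * (f 2 - f 0) ^ 2 + β ^ 2 * (f 2 - f 1) ^ 2 ≤ 1 := by
      have h1 := Real.sq_sqrt hE0
      have h2 := Real.sqrt_nonneg (α ^ 2 * (f 2 - f 0) ^ 2 + β ^ 2 * (f 2 - f 1) ^ 2)
      unfold LDirac at hf
      nlinarith
    have hs : ∑ i, μ i * f i - ∑ i, ν i * f i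
        = a * f 0 + b * f 1 + (-(a + b)) * f 2 := by
      simp only [Fin.sum_univ_three, ← hc, ha, hb]; linear_combination (f 2) * (hc - ha - hb)
    rw [hs]
    have hα' : α ≠ 0 := ne_of_gt hα
    have hβ' : β ≠ 0 := ne_of_gt hβ
    have hsq : (a * f 0 + b * f 1 + (-(a + b)) * f 2) ^ 2 ≤ R ^ 2 := by
      rw [hR2]
      set p := a / α with hp
      set q := b / β with hq
      set x := α * (f 2 - f 0) with hx
      set y := β * (f 2 - f 1) with hy
      have h1 : a ^ 2 / α ^ 2 + b ^ 2 / β ^ 2 = p ^ 2 + q ^ 2 := by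
        rw [hp, hq, div_pow, div_pow]
      have h2 : x ^ 2 + y ^ 2 ≤ 1 := by rw [hx, hy]; nlinarith
      have h3 : a * f 0 + b * f 1 + (-(a + b)) * f 2 = -(p * x + q * y) := by
        rw [hp, hq, hx, hy]; field_simp; ring
      rw [h1, h3]
      have hcs : (p * x + q * y) ^ 2 ≤ (p ^ 2 + q ^ 2) * (x ^ 2 + y ^ 2) := by
        nlinarith [sq_nonneg (p * y - q * x)]
      nlinarith [sq_nonneg p, sq_nonneg q]
    calc |a * f 0 + b * f 1 + (-(a + b)) * f 2|
        = Real.sqrt ((a * f 0 + b * f 1 + (-(a + b)) * f 2) ^ 2) :=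
          (Real.sqrt_sq_eq_abs _).symm
      _ ≤ Real.sqrt (R ^ 2) := Real.sqrt_le_sqrt hsq
      _ = R := Real.sqrt_sq hR0
  -- membership
  have hmem : R ∈ {t : ℝ | ∃ f : Fin 3 → ℝ, LDirac α β f ≤ 1 ∧
      t = |∑ i, μ i * f i - ∑ i, ν i * f i|} := by
    rcases eq_or_lt_of_le hR0 with h0 | h0
    · refine ⟨0, ?_, ?_⟩
      · simp [LDirac]
      · simp [← h0]
    · refine ⟨![a / (α ^ 2 * R), b / (β ^ 2 * R), 0], ?_, ?_⟩
      · unfold LDirac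
        have hα' : α ≠ 0 := ne_of_gt hα
        have hβ' : β ≠ 0 := ne_of_gt hβ
        have hR' : R ≠ 0 := ne_of_gt h0
        have : α ^ 2 * (((0:ℝ)) - a / (α ^ 2 * R)) ^ 2 +
            β ^ 2 * (((0:ℝ)) - b / (β ^ 2 * R)) ^ 2 = 1 := by
          have h1 : α ^ 2 * (((0:ℝ)) - a / (α ^ 2 * R)) ^ 2 +
              β ^ 2 * (((0:ℝ)) - b / (β ^ 2 * R)) ^ 2
              = (a ^ 2 / α ^ 2 + b ^ 2 / β ^ 2) / R ^ 2 := by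
            field_simp; ring
          rw [h1, ← hR2, div_self (pow_ne_zero 2 hR')]
        simp only [Matrix.cons_val_zero, Matrix.cons_val_one, Matrix.head_cons,
          Matrix.cons_val_two, Matrix.tail_cons]
        rw [this]
        simp
      · have hα' : α ≠ 0 := ne_of_gt hα
        have hβ' : β ≠ 0 := ne_of_gt hβ
        have hR' : R ≠ 0 := ne_of_gt h0
        have hs : ∑ i, μ i * (![a / (α ^ 2 * R), b / (β ^ 2 * R), 0] i)
            - ∑ i, ν i * (![a / (α ^ 2 * R), b / (β ^ 2 * R), 0] i)
            = a * (a / (α ^ 2 * R)) + b * (b / (β ^ 2 * R)) := by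
          simp only [Fin.sum_univ_three, Matrix.cons_val_zero, Matrix.cons_val_one,
            Matrix.head_cons, Matrix.cons_val_two, Matrix.tail_cons, ha, hb]
          ring
        rw [hs]
        have : a * (a / (α ^ 2 * R)) + b * (b / (β ^ 2 * R)) = R := by
          have h1 : a * (a / (α ^ 2 * R)) + b * (b / (β ^ 2 * R))
              = (a ^ 2 / α ^ 2 + b ^ 2 / β ^ 2) / R := by
            field_simp
          rw [h1, ← hR2, pow_two, mul_div_assoc, div_self hR', mul_one]
        rw [this, abs_of_pos h0]
  unfold rhoEx
  exact le_antisymm (csSup_le ⟨R, hmem⟩ hub) (le_csSup ⟨R, hub⟩ hmem)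

/-- The metric induced on the state space (probability vectors) by the
Dirac operator of Example 7.1 is `ρ_L(μ,ν) = ((μ₁-ν₁)²/α² + (μ₂-ν₂)²/β²)^{1/2}`; in
particular `ρ_L(δ₁,δ₃) = 1/α`, `ρ_L(δ₂,δ₃) = 1/β`, `ρ_L(δ₁,δ₂) = (1/α² + 1/β²)^{1/2}`. -/
theorem stmt_14 (α β : ℝ) (hα : 0 < α) (hβ : 0 < β) :
    (∀ μ ν : Fin 3 → ℝ,
      (∀ i, 0 ≤ μ i) → ∑ i, μ i = 1 → (∀ i, 0 ≤ ν i) → ∑ i, ν i = 1 →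
      rhoEx α β μ ν =
        Real.sqrt ((μ 0 - ν 0) ^ 2 / α ^ 2 + (μ 1 - ν 1) ^ 2 / β ^ 2)) ∧
    rhoEx α β (Pi.single 0 1) (Pi.single 2 1) = 1 / α ∧
    rhoEx α β (Pi.single 1 1) (Pi.single 2 1) = 1 / β ∧
    rhoEx α β (Pi.single 0 1) (Pi.single 1 1) =
      Real.sqrt (1 / α ^ 2 + 1 / β ^ 2) := by
  refine ⟨fun μ ν _ hμs _ hνs => rhoEx_key α β hα hβ μ ν (by rw [hμs, hνs]), ?_, ?_, ?_⟩
  · rw [rhoEx_key α β hα hβ _ _ (by simp [Fin.sum_univ_three])]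
    simp only [Pi.single_eq_same, Pi.single_eq_of_ne (by decide : (0:Fin 3) ≠ 2),
      Pi.single_eq_of_ne (by decide : (1:Fin 3) ≠ 0),
      Pi.single_eq_of_ne (by decide : (1:Fin 3) ≠ 2)]
    rw [show (1 - 0 : ℝ) ^ 2 / α ^ 2 + (0 - 0 : ℝ) ^ 2 / β ^ 2 = (1 / α) ^ 2 by
      field_simp; ring]
    exact Real.sqrt_sq (by positivity)
  · rw [rhoEx_key α β hα hβ _ _ (by simp [Fin.sum_univ_three])]
    simp only [Pi.single_eq_same, Pi.single_eq_of_ne (by decide : (0:Fin 3) ≠ 1),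
      Pi.single_eq_of_ne (by decide : (0:Fin 3) ≠ 2),
      Pi.single_eq_of_ne (by decide : (1:Fin 3) ≠ 2)]
    rw [show (0 - 0 : ℝ) ^ 2 / α ^ 2 + (1 - 0 : ℝ) ^ 2 / β ^ 2 = (1 / β) ^ 2 by
      field_simp; ring]
    exact Real.sqrt_sq (by positivity)
  · rw [rhoEx_key α β hα hβ _ _ (by simp [Fin.sum_univ_three])]
    norm_num [Pi.single_eq_same, Pi.single_eq_of_ne (by decide : (0:Fin 3) ≠ 1),
      Pi.single_eq_of_ne (by decide : (1:Fin 3) ≠ 0)]
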